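/- Let n ≥ 1, let α = (ρ_1 e^{iφ_1}, …, ρ_n e^{iφ_n}) ∈ ℂ^n be a tuple of nonzero complex numbers in polar form, and let t be a weighted full binary tree with n leaves, the k-th leaf (in left-to-right order) carrying weight w_k = ρ_k² and phase φ_k. Then the 2^n × 2 matrix C(t) satisfies C(t)|1⟩ = |W(α)⟩. -/

import Mathlib

/-- A weighted full binary tree: either a leaf carrying a weight and a phase,
or an ordered pair of weighted full binary trees. -/
inductive WTree where
  | leaf (w : ℝ) (phase : ℝ)
  | node (t₁ t₂ : WTree)

namespace WTree

/-- Number of leaves. -/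
def leaves : WTree → ℕ
  | .leaf _ _ => 1
  | .node t₁ t₂ => t₁.leaves + t₂.leaves

/-- Total weight of the leaves. -/
def weight : WTree → ℝ
  | .leaf w _ => w
  | .node t₁ t₂ => t₁.weight + t₂.weight

/-- The list of (weight, phase) pairs of the leaves, in left-to-right order. -/
def leafData : WTree → List (ℝ × ℝ)
  | .leaf w φ => [(w, φ)]
  | .node t₁ t₂ => t₁.leafData ++ t₂.leafData

end WTree

/-- The `4 × 2` isometry `F_p = |00⟩⟨0| + √p |01⟩⟨1| + √(1-p) |10⟩⟨1|`,
with its output index pair `(b₁, b₂)` encoding the bitstring `b₁b₂`. -/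
noncomputable def Fp (p : ℝ) : Bool × Bool → Bool → ℂ
  | (false, false), false => 1
  | (false, true), true => ((Real.sqrt p : ℝ) : ℂ)
  | (true, false), true => ((Real.sqrt (1 - p) : ℝ) : ℂ)
  | _, _ => 0

/-- The `2^{ℓ(t)} × 2` matrix `C(t)`, built recursively:
`C(⊥ᵢ) = P(φᵢ) = diag(1, e^{iφᵢ})` on a leaf, and
`C(t₁, t₂) = (C(t₁) ⊗ C(t₂)) · F_p` with `p = w(t₂)/w(t)` on a node. -/
noncomputable def Ckt : (t : WTree) → (Fin t.leaves → Bool) → Bool → ℂ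
  | .leaf _ φ => fun x i =>
      if x = fun _ => i then (if i then Complex.exp (φ * Complex.I) else 1)
      else 0
  | .node t₁ t₂ => fun x i =>
      ∑ b : Bool × Bool,
        Ckt t₁ (fun j => x (Fin.castAdd t₂.leaves j)) b.1 *
        Ckt t₂ (fun j => x (Fin.natAdd t₁.leaves j)) b.2 *
        Fp (t₂.weight / (t₁.weight + t₂.weight)) b i

/-- The computational basis vector of `ℂ^{2^n}` indexed by the bitstring `x`. -/
def basisState {n : ℕ} (x : Fin n → Bool) : (Fin n → Bool) → ℂ :=
  fun y => if y = x then 1 else 0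

/-- The weight `w(α) = Σ_i |α_i|²` of a tuple of complex numbers. -/
noncomputable def wSum {n : ℕ} (α : Fin n → ℂ) : ℝ :=
  ∑ i, ‖α i‖ ^ 2

/-- The weighted W-state `|W(α)⟩ = (1/√w(α)) Σ_k α_k |e_k⟩ ∈ ℂ^{2^n}`. -/
noncomputable def wState {n : ℕ} (α : Fin n → ℂ) : (Fin n → Bool) → ℂ :=
  fun y => ((Real.sqrt (wSum α) : ℝ) : ℂ)⁻¹ *
    ∑ k : Fin n, α k * basisState (fun i => decide (i = k)) y

namespace WTreeAux

lemma leafData_length (t : WTree) : t.leafData.length = t.leaves := by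
  induction t with
  | leaf w φ => rfl
  | node t₁ t₂ ih₁ ih₂ => simp [WTree.leafData, WTree.leaves, ih₁, ih₂]

lemma weight_eq_sum (t : WTree) : t.weight = (t.leafData.map Prod.fst).sum := by
  induction t with
  | leaf w φ => simp [WTree.weight, WTree.leafData]
  | node t₁ t₂ ih₁ ih₂ => simp [WTree.weight, WTree.leafData, ih₁, ih₂]

lemma leaves_pos (t : WTree) : 0 < t.leaves := by
  induction t with
  | leaf w φ => exact Nat.one_pos
  | node t₁ t₂ ih₁ ih₂ => exact Nat.add_pos_left ih₁ _

lemma funext_add_iff {n m : ℕ} {x y : Fin (n + m) → Bool} :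
    x = y ↔ ((fun j => x (Fin.castAdd m j)) = fun j => y (Fin.castAdd m j)) ∧
      ((fun j => x (Fin.natAdd n j)) = fun j => y (Fin.natAdd n j)) := by
  constructor
  · rintro rfl; exact ⟨rfl, rfl⟩
  · rintro ⟨h₁, h₂⟩
    funext i
    refine Fin.addCases (fun j => ?_) (fun j => ?_) i
    · exact congrFun h₁ j
    · exact congrFun h₂ j

lemma basis_split {n m : ℕ} (e : Fin (n + m) → Bool) (x : Fin (n + m) → Bool) :
    basisState e x =
      basisState (fun j => e (Fin.castAdd m j)) (fun j => x (Fin.castAdd m j)) *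
      basisState (fun j => e (Fin.natAdd n j)) (fun j => x (Fin.natAdd n j)) := by
  simp only [basisState]
  by_cases h : x = e
  · subst h; simp
  · have h' := mt (@funext_add_iff n m x e).mpr h
    rw [if_neg h]
    rcases not_and_or.mp h' with h₁ | h₁ <;> simp [h₁]

lemma Ckt_false (t : WTree) (x : Fin t.leaves → Bool) :
    Ckt t x false = basisState (fun _ => false) x := by
  induction t with
  | leaf w φ => simp [Ckt, basisState]
  | node t₁ t₂ ih₁ ih₂ =>
    simp only [Ckt, Fintype.sum_prod_type, Fintype.sum_bool, Fp, ih₁, ih₂]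
    simp only [mul_zero, zero_mul, mul_one, add_zero, zero_add]
    exact (basis_split (fun _ => false) x).symm

lemma basis_castAdd {n₁ n₂ : ℕ} (k : Fin n₁) (x : Fin (n₁ + n₂) → Bool) :
    basisState (fun i => decide (i = Fin.castAdd n₂ k)) x =
      basisState (fun i => decide (i = k)) (fun j => x (Fin.castAdd n₂ j)) *
      basisState (fun _ => false) (fun j => x (Fin.natAdd n₁ j)) := by
  rw [basis_split]
  congr 1
  · congr 1
    funext j
    simp [Fin.castAdd_inj]
  · congr 1
    funext j
    simp only [decide_eq_false_iff_not, Fin.ext_iff, Fin.coe_natAdd, Fin.coe_castAdd]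
    have := k.isLt
    omega

lemma basis_natAdd {n₁ n₂ : ℕ} (k : Fin n₂) (x : Fin (n₁ + n₂) → Bool) :
    basisState (fun i => decide (i = Fin.natAdd n₁ k)) x =
      basisState (fun _ => false) (fun j => x (Fin.castAdd n₂ j)) *
      basisState (fun i => decide (i = k)) (fun j => x (Fin.natAdd n₁ j)) := by
  rw [basis_split]
  congr 1
  · congr 1
    funext j
    simp only [decide_eq_false_iff_not, Fin.ext_iff, Fin.coe_natAdd, Fin.coe_castAdd]
    have := j.isLt
    omega
  · congr 1
    funext j
    simp [Fin.ext_iff]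

end WTreeAux

lemma WTreeAux.node_step (t₁ t₂ : WTree)
    (ρ φ : Fin (t₁.leaves + t₂.leaves) → ℝ) (hρ : ∀ k, 0 < ρ k)
    (hl₁ : t₁.leafData = List.ofFn fun i =>
      (ρ (Fin.castAdd t₂.leaves i) ^ 2, φ (Fin.castAdd t₂.leaves i)))
    (hl₂ : t₂.leafData = List.ofFn fun j =>
      (ρ (Fin.natAdd t₁.leaves j) ^ 2, φ (Fin.natAdd t₁.leaves j)))
    (e₁ : (fun x => Ckt t₁ x true) = wState (fun i =>
      (ρ (Fin.castAdd t₂.leaves i) : ℂ) *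
        Complex.exp (φ (Fin.castAdd t₂.leaves i) * Complex.I)))
    (e₂ : (fun x => Ckt t₂ x true) = wState (fun j =>
      (ρ (Fin.natAdd t₁.leaves j) : ℂ) *
        Complex.exp (φ (Fin.natAdd t₁.leaves j) * Complex.I))) :
    (fun x : Fin (t₁.leaves + t₂.leaves) → Bool => Ckt (t₁.node t₂) x true) =
      wState (fun k => (ρ k : ℂ) * Complex.exp (φ k * Complex.I)) := by
  have e₁' : ∀ y, Ckt t₁ y true =
      wState (fun i => (ρ (Fin.castAdd t₂.leaves i) : ℂ) *
        Complex.exp (φ (Fin.castAdd t₂.leaves i) * Complex.I)) y :=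
    fun y => congrFun e₁ y
  have e₂' : ∀ y, Ckt t₂ y true =
      wState (fun i => (ρ (Fin.natAdd t₁.leaves i) : ℂ) *
        Complex.exp (φ (Fin.natAdd t₁.leaves i) * Complex.I)) y :=
    fun y => congrFun e₂ y
  have hw₁ : t₁.weight = ∑ i : Fin t₁.leaves, ρ (Fin.castAdd t₂.leaves i) ^ 2 := by
    rw [WTreeAux.weight_eq_sum, hl₁]
    simp [List.sum_ofFn, Function.comp]
  have hw₂ : t₂.weight = ∑ i : Fin t₂.leaves, ρ (Fin.natAdd t₁.leaves i) ^ 2 := by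
    rw [WTreeAux.weight_eq_sum, hl₂]
    simp [List.sum_ofFn, Function.comp]
  have hw₁pos : 0 < t₁.weight := by
    rw [hw₁]
    exact Finset.sum_pos (fun k _ => pow_pos (hρ _) 2)
      (Finset.univ_nonempty_iff.mpr ⟨⟨0, WTreeAux.leaves_pos t₁⟩⟩)
  have hw₂pos : 0 < t₂.weight := by
    rw [hw₂]
    exact Finset.sum_pos (fun k _ => pow_pos (hρ _) 2)
      (Finset.univ_nonempty_iff.mpr ⟨⟨0, WTreeAux.leaves_pos t₂⟩⟩)
  have hwpos : 0 < t₁.weight + t₂.weight := by positivity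
  have habs : ∀ (n : ℕ) (r ph : Fin n → ℝ), (∀ k, 0 < r k) →
      wSum (fun k => (r k : ℂ) * Complex.exp (ph k * Complex.I)) = ∑ k, r k ^ 2 := by
    intro n r ph hr
    refine Finset.sum_congr rfl fun k _ => ?_
    simp [map_mul, Complex.norm_exp_ofReal_mul_I, abs_of_pos (hr k)]
  have hWα : wSum (fun k : Fin (t₁.leaves + t₂.leaves) =>
      (ρ k : ℂ) * Complex.exp (φ k * Complex.I)) = t₁.weight + t₂.weight := by
    rw [habs _ ρ φ hρ, hw₁, hw₂]
    exact Fin.sum_univ_add (f := fun k => ρ k ^ 2)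
  have hWα₁ : wSum (fun i => (ρ (Fin.castAdd t₂.leaves i) : ℂ) *
      Complex.exp (φ (Fin.castAdd t₂.leaves i) * Complex.I)) = t₁.weight := by
    rw [habs _ _ _ (fun i => hρ _), hw₁]
  have hWα₂ : wSum (fun i => (ρ (Fin.natAdd t₁.leaves i) : ℂ) *
      Complex.exp (φ (Fin.natAdd t₁.leaves i) * Complex.I)) = t₂.weight := by
    rw [habs _ _ _ (fun i => hρ _), hw₂]
  have hs₁ : ((Real.sqrt t₁.weight : ℝ) : ℂ) ≠ 0 := by
    exact_mod_cast (Real.sqrt_pos.mpr hw₁pos).ne'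
  have hs₂ : ((Real.sqrt t₂.weight : ℝ) : ℂ) ≠ 0 := by
    exact_mod_cast (Real.sqrt_pos.mpr hw₂pos).ne'
  have hs : ((Real.sqrt (t₁.weight + t₂.weight) : ℝ) : ℂ) ≠ 0 := by
    exact_mod_cast (Real.sqrt_pos.mpr hwpos).ne'
  have key₂ : ((Real.sqrt (t₂.weight / (t₁.weight + t₂.weight)) : ℝ) : ℂ) =
      ((Real.sqrt (t₁.weight + t₂.weight) : ℝ) : ℂ)⁻¹ *
        ((Real.sqrt t₂.weight : ℝ) : ℂ) := by
    rw [Real.sqrt_div hw₂pos.le]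
    push_cast
    rw [div_eq_mul_inv, mul_comm]
  have key₁ : ((Real.sqrt (1 - t₂.weight / (t₁.weight + t₂.weight)) : ℝ) : ℂ) =
      ((Real.sqrt (t₁.weight + t₂.weight) : ℝ) : ℂ)⁻¹ *
        ((Real.sqrt t₁.weight : ℝ) : ℂ) := by
    rw [show 1 - t₂.weight / (t₁.weight + t₂.weight) =
      t₁.weight / (t₁.weight + t₂.weight) by field_simp; ring]
    rw [Real.sqrt_div hw₁pos.le]
    push_cast
    rw [div_eq_mul_inv, mul_comm]
  funext x
  simp only [Ckt, Fintype.sum_prod_type, Fintype.sum_bool, Fp]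
  simp only [mul_zero, zero_mul, mul_one, add_zero, zero_add]
  rw [WTreeAux.Ckt_false t₁, WTreeAux.Ckt_false t₂, e₁' _, e₂' _]
  simp only [wState, hWα, hWα₁, hWα₂]
  rw [Fin.sum_univ_add (f := fun k => ((ρ k : ℂ) * Complex.exp (φ k * Complex.I)) *
    basisState (fun i => decide (i = k)) x)]
  simp only [WTreeAux.basis_castAdd, WTreeAux.basis_natAdd]
  rw [key₁, key₂]
  have h₁ : ∑ k : Fin t₁.leaves,
        (ρ (Fin.castAdd t₂.leaves k) : ℂ) *
          Complex.exp (φ (Fin.castAdd t₂.leaves k) * Complex.I) *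
          ((basisState (fun i => decide (i = k)) fun j => x (Fin.castAdd t₂.leaves j)) *
            basisState (fun _ => false) fun j => x (Fin.natAdd t₁.leaves j)) =
      (∑ k : Fin t₁.leaves,
        (ρ (Fin.castAdd t₂.leaves k) : ℂ) *
          Complex.exp (φ (Fin.castAdd t₂.leaves k) * Complex.I) *
          basisState (fun i => decide (i = k)) fun j => x (Fin.castAdd t₂.leaves j)) *
        basisState (fun _ => false) (fun j => x (Fin.natAdd t₁.leaves j)) := by
    rw [Finset.sum_mul]
    exact Finset.sum_congr rfl fun k _ => by ring
  have h₂ : ∑ k : Fin t₂.leaves,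
        (ρ (Fin.natAdd t₁.leaves k) : ℂ) *
          Complex.exp (φ (Fin.natAdd t₁.leaves k) * Complex.I) *
          ((basisState (fun _ => false) fun j => x (Fin.castAdd t₂.leaves j)) *
            basisState (fun i => decide (i = k)) fun j => x (Fin.natAdd t₁.leaves j)) =
      basisState (fun _ => false) (fun j => x (Fin.castAdd t₂.leaves j)) *
      ∑ k : Fin t₂.leaves,
        (ρ (Fin.natAdd t₁.leaves k) : ℂ) *
          Complex.exp (φ (Fin.natAdd t₁.leaves k) * Complex.I) *
          basisState (fun i => decide (i = k)) fun j => x (Fin.natAdd t₁.leaves j) := by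
    rw [Finset.mul_sum]
    exact Finset.sum_congr rfl fun k _ => by ring
  rw [h₁, h₂]
  field_simp
  simp only [mul_comm Complex.I]
  ring


/-- If `t` is a weighted full binary tree whose `k`-th leaf
(in left-to-right order) carries weight `ρ_k²` and phase `φ_k`, where each
`ρ_k > 0`, then `C(t) |1⟩ = |W(α)⟩` for `α = (ρ_k e^{iφ_k})_k`. -/
theorem Ckt_one_eq_wState
    (t : WTree) (ρ φ : Fin t.leaves → ℝ) (hρ : ∀ k, 0 < ρ k)
    (hleaf : t.leafData = List.ofFn (fun k => (ρ k ^ 2, φ k))) :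
    (fun x => Ckt t x true) =
      wState (fun k => (ρ k : ℂ) * Complex.exp (φ k * Complex.I)) := by
  induction t with
  | leaf w ph =>
    haveI : Unique (Fin (WTree.leaf w ph).leaves) :=
      ⟨⟨⟨0, WTreeAux.leaves_pos _⟩⟩, fun k => Fin.ext (Nat.lt_one_iff.mp k.isLt)⟩
    have hfn : ∀ {β : Type} (f : Fin (WTree.leaf w ph).leaves → β),
        List.ofFn f = [f default] := by
      intro β f
      erw [List.ofFn_succ, List.ofFn_zero]
      exact congrArg (fun y => [f y]) (Subsingleton.elim _ _)
    have h1 : ((w : ℝ), ph) = (ρ default ^ 2, φ default) := by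
      have h := hleaf
      rw [hfn] at h
      simpa [WTree.leafData] using h
    have hph : ph = φ default := congrArg Prod.snd h1
    have hα : wSum (fun k => (ρ k : ℂ) * Complex.exp (φ k * Complex.I))
        = ρ default ^ 2 := by
      simp [wSum, Fintype.sum_unique, Complex.norm_exp_ofReal_mul_I,
        abs_of_pos (hρ default)]
    have hne : ((ρ default : ℝ) : ℂ) ≠ 0 := by exact_mod_cast (hρ default).ne'
    have he : (fun i : Fin (WTree.leaf w ph).leaves => decide (i = default))
        = fun _ => true := by
      funext i
      simp [Unique.eq_default i]
    funext x
    simp only [Ckt, wState, basisState, hα, Fintype.sum_unique, he,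
      Real.sqrt_sq (hρ default).le, hph]
    by_cases hx : x = fun _ => true
    · simp only [hx, if_pos rfl, mul_one, ↓reduceIte]
      field_simp
    · simp [hx]
  | node t₁ t₂ ih₁ ih₂ =>
    have hsplit := hleaf.trans (List.ofFn_add (f := fun k => (ρ k ^ 2, φ k)))
    obtain ⟨hl₁, hl₂⟩ := List.append_inj hsplit
      (by rw [WTreeAux.leafData_length]; simp)
    exact WTreeAux.node_step t₁ t₂ ρ φ hρ hl₁ hl₂
      (ih₁ _ _ (fun i => hρ _) hl₁) (ih₂ _ _ (fun i => hρ _) hl₂)
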